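/- Let T > 0, let A ⊂ ℝ be compact, let k, θ, δ > 0, and consider the operator (ℒu)(t,a,x) = ∂_a u + k(θ − x)∂_x u + (δ²x(1−x)/2)∂²_{xx} u acting on functions on [0,T] × A × [0,1]. Let ν and μ be finite positive measures on [0,T] × A × [0,1], and let (m_t)_{t∈[0,T]} be a measurable family of finite positive measures on A × [0,1] with ∫_0^T m_t(A × [0,1]) dt < ∞, such that for every bounded function u on [0,T] × A × [0,1] that is C¹ in t, C¹ in a and C² in x with bounded derivatives, ∫ u dν + ∫_0^T ∫ (∂_t u + ℒu) dm_t dt = ∫ u dμ. Then for every bounded function h on [0,T] × A × [0,1] that is C¹ in t, C¹ in a and C² in x with bounded derivatives, and every ψ ∈ C¹([0,T]), one has |∫_0^T ψ′(t) (∫_{A×[0,1]} h(t,a,x) m_t(da,dx)) dt| ≤ C·‖ψ‖_∞, where C = ‖h‖_∞·(ν([0,T]×A×[0,1]) + μ([0,T]×A×[0,1])) + ‖∂_t h + ℒh‖_∞·∫_0^T m_t(A×[0,1]) dt. -/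

import Mathlib

open MeasureTheory Set

/-- Partial derivative in the time variable. -/
noncomputable def partialT (u : ℝ → ℝ → ℝ → ℝ) (t a x : ℝ) : ℝ :=
  deriv (fun s => u s a x) t

/-- Partial derivative in the age variable. -/
noncomputable def partialA (u : ℝ → ℝ → ℝ → ℝ) (t a x : ℝ) : ℝ :=
  deriv (fun b => u t b x) a

/-- Partial derivative in the state variable. -/
noncomputable def partialX (u : ℝ → ℝ → ℝ → ℝ) (t a x : ℝ) : ℝ :=
  deriv (fun y => u t a y) x

/-- Second partial derivative in the state variable. -/
noncomputable def partialXX (u : ℝ → ℝ → ℝ → ℝ) (t a x : ℝ) : ℝ :=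
  deriv (deriv (fun y => u t a y)) x

/-- The generator of the Jacobi capacity-factor diffusion extended by the age
derivative: `ℒu = ∂_a u + k(θ−x)∂_x u + (δ²x(1−x)/2)∂²_{xx} u`. -/
noncomputable def genL (k θ δ : ℝ) (u : ℝ → ℝ → ℝ → ℝ) (t a x : ℝ) : ℝ :=
  partialA u t a x + k * (θ - x) * partialX u t a x
    + δ ^ 2 * x * (1 - x) / 2 * partialXX u t a x

/-- The class `C^{1,1,2}_b`: bounded, `C¹` in `t`, `C¹` in `a`, `C²` in `x`,
with bounded partial derivatives. -/
def IsC112b (u : ℝ → ℝ → ℝ → ℝ) : Prop :=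
  (∀ a x, ContDiff ℝ 1 fun t => u t a x) ∧
  (∀ t x, ContDiff ℝ 1 fun a => u t a x) ∧
  (∀ t a, ContDiff ℝ 2 fun y => u t a y) ∧
  ∃ C : ℝ, ∀ t a x : ℝ, |u t a x| ≤ C ∧ |partialT u t a x| ≤ C ∧
      |partialA u t a x| ≤ C ∧ |partialX u t a x| ≤ C ∧ |partialXX u t a x| ≤ C

open Filter
open scoped ENNReal

/-- A kernel all of whose values are finite measures is s-finite. -/
lemma isSFiniteKernel_of_forall_isFiniteMeasure {α β : Type*} [MeasurableSpace α]
    [MeasurableSpace β] (κ : ProbabilityTheory.Kernel α β)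
    (h : ∀ a, IsFiniteMeasure (κ a)) : ProbabilityTheory.IsSFiniteKernel κ := by
  classical
  have hmeas : Measurable fun a => κ a Set.univ :=
    κ.measurable_coe MeasurableSet.univ
  set idx : α → ℕ := fun a => ⌊(κ a Set.univ).toReal⌋₊ with hidx
  have hidxm : Measurable idx := Nat.measurable_floor.comp hmeas.ennreal_toReal
  have hs : ∀ n : ℕ, MeasurableSet (idx ⁻¹' {n}) := fun n =>
    hidxm (measurableSet_singleton n)
  refine ⟨⟨fun n => ProbabilityTheory.Kernel.piecewise (hs n) κ 0, fun n => ?_, ?_⟩⟩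
  · refine ⟨⟨(n : ℝ≥0∞) + 1, by simp [ENNReal.add_lt_top], fun a => ?_⟩⟩
    rw [ProbabilityTheory.Kernel.piecewise_apply]
    split_ifs with ha
    · have hne : κ a Set.univ ≠ ⊤ := (h a).measure_univ_lt_top.ne
      have han : idx a = n := ha
      have h1 : (κ a Set.univ).toReal < (n : ℝ) + 1 := by
        rw [← han]
        exact Nat.lt_floor_add_one ((κ a Set.univ).toReal)
      calc κ a Set.univ = ENNReal.ofReal ((κ a Set.univ).toReal) := (ENNReal.ofReal_toReal hne).symm
        _ ≤ ENNReal.ofReal ((n : ℝ) + 1) := ENNReal.ofReal_le_ofReal h1.le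
        _ ≤ (n : ℝ≥0∞) + 1 := by
            rw [ENNReal.ofReal_add (by positivity) zero_le_one]
            simp [ENNReal.ofReal_natCast]
    · simp
  · ext a t ht
    rw [ProbabilityTheory.Kernel.sum_apply' _ _ ht]
    rw [tsum_eq_single (idx a) ?_]
    · rw [ProbabilityTheory.Kernel.piecewise_apply]
      simp [Set.mem_preimage]
    · intro n hn
      rw [ProbabilityTheory.Kernel.piecewise_apply]
      have : a ∉ idx ⁻¹' {n} := by
        simp only [Set.mem_preimage, Set.mem_singleton_iff]
        exact fun hc => hn (hc ▸ rfl)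
      simp [this]

/-- Joint measurability of the derivative in the second variable. -/
lemma measurable_deriv_prod {α : Type*} [MeasurableSpace α] {f : α → ℝ → ℝ}
    (hf : Measurable fun p : α × ℝ => f p.1 p.2)
    (hd : ∀ a t, DifferentiableAt ℝ (f a) t) :
    Measurable fun p : α × ℝ => deriv (f p.1) p.2 := by
  have key : ∀ p : α × ℝ, Tendsto
      (fun n : ℕ => (f p.1 (p.2 + 1 / ((n : ℝ) + 1)) - f p.1 p.2) * ((n : ℝ) + 1))
      atTop (nhds (deriv (f p.1) p.2)) := by
    intro p
    have hder := (hd p.1 p.2).hasDerivAt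
    rw [hasDerivAt_iff_tendsto_slope] at hder
    have hseq : Tendsto (fun n : ℕ => p.2 + 1 / ((n : ℝ) + 1)) atTop (nhdsWithin p.2 {p.2}ᶜ) := by
      apply tendsto_nhdsWithin_of_tendsto_nhds_of_eventually_within
      · simpa using tendsto_const_nhds.add (tendsto_one_div_add_atTop_nhds_zero_nat :
          Tendsto (fun n : ℕ => 1 / ((n : ℝ) + 1)) atTop (nhds 0))
      · filter_upwards with n
        simp only [Set.mem_compl_iff, Set.mem_singleton_iff]
        intro hcon
        have h1 : (1 : ℝ) / ((n : ℝ) + 1) = 0 := by linarith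
        have h2 : (0:ℝ) < 1 / ((n:ℝ)+1) := by positivity
        linarith
    refine (hder.comp hseq).congr fun n => ?_
    have hne : ((n : ℝ) + 1) ≠ 0 := by positivity
    simp only [Function.comp_apply, slope_def_field]
    field_simp
    rw [show p.2 * ((n:ℝ) + 1) + 1 - p.2 * ((n:ℝ) + 1) = 1 by ring, mul_one]
  have hmeas : ∀ n : ℕ, Measurable
      (fun p : α × ℝ => (f p.1 (p.2 + 1 / ((n : ℝ) + 1)) - f p.1 p.2) * ((n : ℝ) + 1)) := by
    intro n
    exact ((hf.comp (measurable_fst.prodMk (measurable_snd.add_const _))).sub hf).mul_const _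
  exact measurable_of_tendsto_metrizable hmeas (tendsto_pi_nhds.mpr key)

lemma deriv_contDiff_of_two {f : ℝ → ℝ} (hf : ContDiff ℝ 2 f) : ContDiff ℝ 1 (deriv f) := by
  have h2 : ContDiff ℝ ((1 : ℕ) + 1) f := by exact_mod_cast hf
  exact (contDiff_succ_iff_deriv.mp h2).2.2

section MeasPartials

variable {h : ℝ → ℝ → ℝ → ℝ}

lemma meas_slice (hb : IsC112b h) (t : ℝ) :
    Measurable fun p : ℝ × ℝ => h t p.1 p.2 :=
  measurable_uncurry_of_continuous_of_measurable (u := fun a x => h t a x)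
    (fun x => (hb.2.1 t x).continuous) (fun a => (hb.2.2.1 t a).continuous.measurable)

lemma meas_joint (hb : IsC112b h) :
    Measurable fun q : ℝ × ℝ × ℝ => h q.1 q.2.1 q.2.2 :=
  measurable_uncurry_of_continuous_of_measurable (u := fun t (p : ℝ × ℝ) => h t p.1 p.2)
    (fun p => (hb.1 p.1 p.2).continuous) (fun t => meas_slice hb t)

lemma meas_partialT (hb : IsC112b h) :
    Measurable fun q : ℝ × ℝ × ℝ => partialT h q.1 q.2.1 q.2.2 := by
  have hf : Measurable fun q : (ℝ × ℝ) × ℝ => h q.2 q.1.1 q.1.2 :=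
    (meas_joint hb).comp (measurable_snd.prodMk measurable_fst)
  have := measurable_deriv_prod (f := fun (p : ℝ × ℝ) t => h t p.1 p.2) hf
    (fun p t => ((hb.1 p.1 p.2).differentiable one_ne_zero).differentiableAt)
  exact this.comp (measurable_snd.prodMk measurable_fst)

lemma meas_partialA (hb : IsC112b h) :
    Measurable fun q : ℝ × ℝ × ℝ => partialA h q.1 q.2.1 q.2.2 := by
  have hf : Measurable fun q : (ℝ × ℝ) × ℝ => h q.1.1 q.2 q.1.2 :=
    (meas_joint hb).comp (measurable_fst.fst.prodMk
      (measurable_snd.prodMk measurable_fst.snd))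
  have := measurable_deriv_prod (f := fun (p : ℝ × ℝ) a => h p.1 a p.2) hf
    (fun p a => ((hb.2.1 p.1 p.2).differentiable one_ne_zero).differentiableAt)
  exact this.comp ((measurable_fst.prodMk measurable_snd.snd).prodMk measurable_snd.fst)

lemma meas_partialX (hb : IsC112b h) :
    Measurable fun q : ℝ × ℝ × ℝ => partialX h q.1 q.2.1 q.2.2 := by
  have hf : Measurable fun q : (ℝ × ℝ) × ℝ => h q.1.1 q.1.2 q.2 :=
    (meas_joint hb).comp (measurable_fst.fst.prodMk
      (measurable_fst.snd.prodMk measurable_snd))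
  have := measurable_deriv_prod (f := fun (p : ℝ × ℝ) x => h p.1 p.2 x) hf
    (fun p x => ((hb.2.2.1 p.1 p.2).differentiable two_ne_zero).differentiableAt)
  exact this.comp ((measurable_fst.prodMk measurable_snd.fst).prodMk measurable_snd.snd)

lemma meas_partialXX (hb : IsC112b h) :
    Measurable fun q : ℝ × ℝ × ℝ => partialXX h q.1 q.2.1 q.2.2 := by
  have hf : Measurable fun q : (ℝ × ℝ) × ℝ => partialX h q.1.1 q.1.2 q.2 :=
    (meas_partialX hb).comp (measurable_fst.fst.prodMk
      (measurable_fst.snd.prodMk measurable_snd))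
  have := measurable_deriv_prod (f := fun (p : ℝ × ℝ) => deriv (fun y => h p.1 p.2 y)) hf
    (fun p x => ((deriv_contDiff_of_two (hb.2.2.1 p.1 p.2)).differentiable one_ne_zero).differentiableAt)
  exact this.comp ((measurable_fst.prodMk measurable_snd.fst).prodMk measurable_snd.snd)

/-- Joint measurability of `∂ₜh + ℒh`. -/
lemma meas_gen (k θ δ : ℝ) (hb : IsC112b h) :
    Measurable fun q : ℝ × ℝ × ℝ =>
      partialT h q.1 q.2.1 q.2.2 + genL k θ δ h q.1 q.2.1 q.2.2 := by
  unfold genL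
  apply (meas_partialT hb).add
  apply ((meas_partialA hb).add _).add
  · exact ((((measurable_const.mul measurable_snd.snd).mul
      (measurable_const.sub measurable_snd.snd)).div measurable_const)).mul
      (meas_partialXX hb)
  · exact (measurable_const.mul ((measurable_const.sub measurable_snd.snd))).mul
      (meas_partialX hb)

end MeasPartials
lemma exists_bound_C1 {f : ℝ → ℝ} (hf : ContDiff ℝ 1 f) {K : Set ℝ} (hK : IsCompact K)
    (h0 : ∀ t ∉ K, ∀ᶠ s in nhds t, f s = 0) :
    ∃ C, 0 ≤ C ∧ ∀ t, |f t| ≤ C ∧ |deriv f t| ≤ C := by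
  obtain ⟨C1, hC1⟩ := hK.exists_bound_of_continuousOn hf.continuous.continuousOn
  obtain ⟨C2, hC2⟩ := hK.exists_bound_of_continuousOn
    (hf.continuous_deriv le_rfl).continuousOn
  refine ⟨max (max C1 C2) 0, le_max_right _ _, fun t => ?_⟩
  by_cases ht : t ∈ K
  · constructor
    · exact le_trans (Real.norm_eq_abs (f t) ▸ hC1 t ht)
        ((le_max_left _ _).trans (le_max_left _ _))
    · exact le_trans (Real.norm_eq_abs (deriv f t) ▸ hC2 t ht)
        ((le_max_right _ _).trans (le_max_left _ _))
  · have hf0 : f t = 0 := (h0 t ht).self_of_nhds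
    have hd0 : deriv f t = 0 := by
      rw [Filter.EventuallyEq.deriv_eq (h0 t ht)]; exact deriv_const t 0
    simp [hf0, hd0, le_max_right]
/-- Bounded variation lemma for renewable producers: under the linear programming
constraint linking the entry measure `ν`, the occupation measure flow `m` and the
exit measure `μ`, the map `t ↦ ∫ h dm_t` has the stated bounded variation property. -/
theorem stmt_11 (T k θ δ : ℝ) (hT : 0 < T) (hk : 0 < k) (hθ : 0 < θ) (hδ : 0 < δ)
    (A : Set ℝ) (hA : IsCompact A)
    (ν μ : Measure (ℝ × ℝ × ℝ)) [IsFiniteMeasure ν] [IsFiniteMeasure μ]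
    (m : ProbabilityTheory.Kernel ℝ (ℝ × ℝ)) (hmfin : ∀ t, IsFiniteMeasure (m t))
    (hmint : ∫⁻ t in Icc (0:ℝ) T, m t (A ×ˢ Icc (0:ℝ) 1) < ⊤)
    (hLP : ∀ u : ℝ → ℝ → ℝ → ℝ, IsC112b u →
      (∫ p in Icc (0:ℝ) T ×ˢ A ×ˢ Icc (0:ℝ) 1, u p.1 p.2.1 p.2.2 ∂ν)
        + (∫ t in Icc (0:ℝ) T, ∫ p in A ×ˢ Icc (0:ℝ) 1,
            (partialT u t p.1 p.2 + genL k θ δ u t p.1 p.2) ∂(m t))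
        = ∫ p in Icc (0:ℝ) T ×ˢ A ×ˢ Icc (0:ℝ) 1, u p.1 p.2.1 p.2.2 ∂μ) :
    ∀ h : ℝ → ℝ → ℝ → ℝ, IsC112b h →
    ∀ ψ : ℝ → ℝ, ContDiff ℝ 1 ψ →
    ∀ Mh Mg Mψ : ℝ,
      (∀ t ∈ Icc (0:ℝ) T, ∀ a ∈ A, ∀ x ∈ Icc (0:ℝ) 1, |h t a x| ≤ Mh) →
      (∀ t ∈ Icc (0:ℝ) T, ∀ a ∈ A, ∀ x ∈ Icc (0:ℝ) 1,
          |partialT h t a x + genL k θ δ h t a x| ≤ Mg) →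
      (∀ t ∈ Icc (0:ℝ) T, |ψ t| ≤ Mψ) →
      |∫ t in Icc (0:ℝ) T,
          deriv ψ t * ∫ p in A ×ˢ Icc (0:ℝ) 1, h t p.1 p.2 ∂(m t)|
        ≤ (Mh * ((ν (Icc (0:ℝ) T ×ˢ A ×ˢ Icc (0:ℝ) 1)).toReal
              + (μ (Icc (0:ℝ) T ×ˢ A ×ˢ Icc (0:ℝ) 1)).toReal)
            + Mg * ∫ t in Icc (0:ℝ) T, (m t (A ×ˢ Icc (0:ℝ) 1)).toReal) * Mψ := by
  intro h hb ψ hψ Mh Mg Mψ hMh hMg hMψ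
  classical
  rcases A.eq_empty_or_nonempty with rfl | ⟨a₀, ha₀⟩
  · simp
  -- nonnegativity of the constants
  have h0T : (0:ℝ) ∈ Icc (0:ℝ) T := ⟨le_rfl, hT.le⟩
  have h01 : (0:ℝ) ∈ Icc (0:ℝ) 1 := ⟨le_rfl, zero_le_one⟩
  have hMh0 : 0 ≤ Mh := (abs_nonneg _).trans (hMh 0 h0T a₀ ha₀ 0 h01)
  have hMg0 : 0 ≤ Mg := (abs_nonneg _).trans (hMg 0 h0T a₀ ha₀ 0 h01)
  have hMψ0 : 0 ≤ Mψ := (abs_nonneg _).trans (hMψ 0 h0T)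
  obtain ⟨C, hC⟩ := hb.2.2.2
  have hC0 : 0 ≤ C := (abs_nonneg _).trans (hC 0 0 0).1
  set S := A ×ˢ Icc (0:ℝ) 1 with hSdef
  have hSm : MeasurableSet S := (hA.isClosed.measurableSet).prod measurableSet_Icc
  have hRm : MeasurableSet (Icc (0:ℝ) T ×ˢ S) := measurableSet_Icc.prod hSm
  haveI : ProbabilityTheory.IsSFiniteKernel m :=
    isSFiniteKernel_of_forall_isFiniteMeasure m hmfin
  haveI : ∀ t, IsFiniteMeasure ((m t).restrict S) := fun t => by
    haveI := hmfin t; infer_instance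
  -- the bump function
  set B : ContDiffBump ((T:ℝ)/2) := ⟨T, 2*T, hT, by linarith⟩ with hBdef
  set χ : ℝ → ℝ := fun t => B t with hχdef
  have hχsm : ContDiff ℝ 1 χ := B.contDiff
  have hmem : ∀ t ∈ Icc (0:ℝ) T, t ∈ Metric.ball (T/2) T := by
    intro t ht
    rw [Metric.mem_ball, Real.dist_eq, abs_sub_lt_iff]
    constructor
    · linarith [ht.2]
    · linarith [ht.1]
  have hχ1' : ∀ t ∈ Icc (0:ℝ) T, ∀ᶠ s in nhds t, χ s = 1 := by
    intro t ht
    filter_upwards [Metric.isOpen_ball.mem_nhds (hmem t ht)] with s hs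
    exact B.one_of_mem_closedBall (Metric.ball_subset_closedBall hs)
  have hχ1 : ∀ t ∈ Icc (0:ℝ) T, χ t = 1 := fun t ht => (hχ1' t ht).self_of_nhds
  have hχd0 : ∀ t ∈ Icc (0:ℝ) T, deriv χ t = 0 := by
    intro t ht
    rw [Filter.EventuallyEq.deriv_eq (hχ1' t ht)]
    exact deriv_const t 1
  set Ψ : ℝ → ℝ := fun t => ψ t * χ t with hΨdef
  have hΨsm : ContDiff ℝ 1 Ψ := hψ.mul hχsm
  have hΨdiff : Differentiable ℝ Ψ := hΨsm.differentiable one_ne_zero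
  have hψdiff : Differentiable ℝ ψ := hψ.differentiable one_ne_zero
  have hχdiff : Differentiable ℝ χ := hχsm.differentiable one_ne_zero
  have hΨeq : ∀ t ∈ Icc (0:ℝ) T, Ψ t = ψ t := by
    intro t ht; simp only [hΨdef, hχ1 t ht, mul_one]
  have hΨd : ∀ t ∈ Icc (0:ℝ) T, deriv Ψ t = deriv ψ t := by
    intro t ht
    have : deriv Ψ t = deriv ψ t * χ t + ψ t * deriv χ t :=
      deriv_mul (hψdiff t) (hχdiff t)
    rw [this, hχ1 t ht, hχd0 t ht]; ring
  -- global bound for Ψ and its derivative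
  obtain ⟨CΨ, hCΨ0, hCΨ⟩ : ∃ CΨ, 0 ≤ CΨ ∧ ∀ t, |Ψ t| ≤ CΨ ∧ |deriv Ψ t| ≤ CΨ := by
    apply exists_bound_C1 hΨsm (isCompact_closedBall (T/2) (2*T))
    intro t ht
    have hopen : IsOpen (Metric.closedBall (T/2) (2*T))ᶜ := Metric.isClosed_closedBall.isOpen_compl
    filter_upwards [hopen.mem_nhds ht] with s hs
    have hs' : χ s = 0 := by
      by_contra hne
      exact hs (Metric.ball_subset_closedBall (B.support_eq ▸ Function.mem_support.mpr hne))
    simp [hΨdef, hs']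
  -- the test function u = Ψ · h and its derivatives
  set u : ℝ → ℝ → ℝ → ℝ := fun t a x => Ψ t * h t a x with hudef
  have hut : ∀ t a x, partialT u t a x = deriv Ψ t * h t a x + Ψ t * partialT h t a x := by
    intro t a x
    exact deriv_mul (hΨdiff t) (((hb.1 a x).differentiable one_ne_zero) t)
  have hua : ∀ t a x, partialA u t a x = Ψ t * partialA h t a x := by
    intro t a x
    exact deriv_const_mul _ (((hb.2.1 t x).differentiable one_ne_zero) a)
  have hux : ∀ t a x, partialX u t a x = Ψ t * partialX h t a x := by
    intro t a x
    exact deriv_const_mul _ (((hb.2.2.1 t a).differentiable two_ne_zero) x)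
  have hder_eq : ∀ t a, deriv (fun y => u t a y) = fun y => Ψ t * partialX h t a y := by
    intro t a
    funext y
    exact deriv_const_mul _ (((hb.2.2.1 t a).differentiable two_ne_zero) y)
  have huxx : ∀ t a x, partialXX u t a x = Ψ t * partialXX h t a x := by
    intro t a x
    show deriv (deriv fun y => u t a y) x = _
    rw [hder_eq t a]
    exact deriv_const_mul _
      (((deriv_contDiff_of_two (hb.2.2.1 t a)).differentiable one_ne_zero) x)
  have hbu : IsC112b u := by
    refine ⟨fun a x => hΨsm.mul (hb.1 a x), fun t x => contDiff_const.mul (hb.2.1 t x),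
      fun t a => contDiff_const.mul (hb.2.2.1 t a), CΨ * C + CΨ * C, fun t a x => ?_⟩
    have hC' := hC t a x
    have hΨ' := hCΨ t
    have e1 : |u t a x| ≤ CΨ * C := by
      rw [hudef, abs_mul]
      exact mul_le_mul hΨ'.1 hC'.1 (abs_nonneg _) hCΨ0
    have e2 : |partialT u t a x| ≤ CΨ * C + CΨ * C := by
      rw [hut t a x]
      refine (abs_add_le _ _).trans (add_le_add ?_ ?_)
      · rw [abs_mul]; exact mul_le_mul hΨ'.2 hC'.1 (abs_nonneg _) hCΨ0
      · rw [abs_mul]; exact mul_le_mul hΨ'.1 hC'.2.1 (abs_nonneg _) hCΨ0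
    have e3 : |partialA u t a x| ≤ CΨ * C := by
      rw [hua t a x, abs_mul]
      exact mul_le_mul hΨ'.1 hC'.2.2.1 (abs_nonneg _) hCΨ0
    have e4 : |partialX u t a x| ≤ CΨ * C := by
      rw [hux t a x, abs_mul]
      exact mul_le_mul hΨ'.1 hC'.2.2.2.1 (abs_nonneg _) hCΨ0
    have e5 : |partialXX u t a x| ≤ CΨ * C := by
      rw [huxx t a x, abs_mul]
      exact mul_le_mul hΨ'.1 hC'.2.2.2.2 (abs_nonneg _) hCΨ0
    have hpos : 0 ≤ CΨ * C := mul_nonneg hCΨ0 hC0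
    exact ⟨e1.trans (by linarith), e2, e3.trans (by linarith),
      e4.trans (by linarith), e5.trans (by linarith)⟩
  -- the function g = ∂ₜ h + ℒ h
  set g : ℝ → ℝ → ℝ → ℝ := fun t a x => partialT h t a x + genL k θ δ h t a x with hgdef
  have hkey : ∀ t a x, partialT u t a x + genL k θ δ u t a x
      = deriv Ψ t * h t a x + Ψ t * g t a x := by
    intro t a x
    rw [hgdef]
    simp only [genL, hut t a x, hua t a x, hux t a x, huxx t a x]
    ring
  -- bound for g on S
  set Cg : ℝ := C + C + k * (θ + 1) * C + δ ^ 2 * C with hCgdef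
  have hCg0 : 0 ≤ Cg := by
    have : 0 ≤ k * (θ + 1) * C := by positivity
    have : 0 ≤ δ ^ 2 * C := by positivity
    rw [hCgdef]; positivity
  have hgb : ∀ t a x, x ∈ Icc (0:ℝ) 1 → |g t a x| ≤ Cg := by
    intro t a x hx
    have hC' := hC t a x
    have b1 : |k * (θ - x)| ≤ k * (θ + 1) := by
      rw [abs_mul, abs_of_pos hk]
      have : |θ - x| ≤ θ + 1 := by
        rw [abs_le]; constructor <;> [linarith [hx.2, hθ]; linarith [hx.1]]
      exact mul_le_mul_of_nonneg_left this hk.le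
    have b2 : |δ ^ 2 * x * (1 - x) / 2| ≤ δ ^ 2 := by
      have h1 : 0 ≤ x := hx.1
      have h2 : x ≤ 1 := hx.2
      have hnn : 0 ≤ δ ^ 2 * x * (1 - x) / 2 :=
        div_nonneg (mul_nonneg (mul_nonneg (sq_nonneg δ) h1) (by linarith)) (by norm_num)
      rw [abs_of_nonneg hnn]
      nlinarith [mul_nonneg (mul_nonneg (sq_nonneg δ) h1) h1,
        mul_nonneg (sq_nonneg δ) (by linarith : (0:ℝ) ≤ 1 - x)]
    have hsplit : |g t a x| ≤ |partialT h t a x| + (|partialA h t a x|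
        + |k * (θ - x)| * |partialX h t a x|
        + |δ ^ 2 * x * (1 - x) / 2| * |partialXX h t a x|) := by
      rw [hgdef]
      simp only [genL]
      refine (abs_add_le _ _).trans (add_le_add le_rfl ?_)
      calc |partialA h t a x + k * (θ - x) * partialX h t a x
            + δ ^ 2 * x * (1 - x) / 2 * partialXX h t a x|
          ≤ |partialA h t a x + k * (θ - x) * partialX h t a x|
            + |δ ^ 2 * x * (1 - x) / 2 * partialXX h t a x| := abs_add_le _ _
        _ ≤ |partialA h t a x| + |k * (θ - x) * partialX h t a x|
            + |δ ^ 2 * x * (1 - x) / 2 * partialXX h t a x| :=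
            add_le_add (abs_add_le _ _) le_rfl
        _ = |partialA h t a x| + |k * (θ - x)| * |partialX h t a x|
            + |δ ^ 2 * x * (1 - x) / 2| * |partialXX h t a x| := by
            rw [abs_mul (k * (θ - x)) (partialX h t a x),
              abs_mul (δ ^ 2 * x * (1 - x) / 2) (partialXX h t a x)]
    refine hsplit.trans ?_
    rw [hCgdef]
    have e3 : |k * (θ - x)| * |partialX h t a x| ≤ k * (θ + 1) * C :=
      mul_le_mul b1 hC'.2.2.2.1 (abs_nonneg _) (by positivity)
    have e4 : |δ ^ 2 * x * (1 - x) / 2| * |partialXX h t a x| ≤ δ ^ 2 * C :=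
      mul_le_mul b2 hC'.2.2.2.2 (abs_nonneg _) (by positivity)
    linarith [hC'.2.1, hC'.2.2.1]
  -- abbreviations
  set H : ℝ → ℝ := fun t => ∫ p in S, h t p.1 p.2 ∂(m t) with hHdef
  set G : ℝ → ℝ := fun t => ∫ p in S, g t p.1 p.2 ∂(m t) with hGdef
  set w : ℝ → ℝ := fun t => (m t S).toReal with hwdef
  -- inner integrability
  have Ih : ∀ t, Integrable (fun p : ℝ × ℝ => h t p.1 p.2) ((m t).restrict S) := by
    intro t
    refine (integrable_const C).mono' (meas_slice hb t).aestronglyMeasurable ?_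
    filter_upwards with p
    simpa [Real.norm_eq_abs] using (hC t p.1 p.2).1
  have hgmeas : Measurable fun q : ℝ × ℝ × ℝ => g q.1 q.2.1 q.2.2 := meas_gen k θ δ hb
  have Ig : ∀ t, Integrable (fun p : ℝ × ℝ => g t p.1 p.2) ((m t).restrict S) := by
    intro t
    refine (integrable_const Cg).mono'
      ((hgmeas.comp (measurable_const.prodMk measurable_id)).aestronglyMeasurable) ?_
    refine (ae_restrict_iff' hSm).mpr (Filter.Eventually.of_forall fun p hp => ?_)
    simpa [Real.norm_eq_abs] using hgb t p.1 p.2 hp.2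
  -- measurability in t of the inner integrals
  have Hsm : StronglyMeasurable H := by
    have h1 : StronglyMeasurable fun q : ℝ × (ℝ × ℝ) => h q.1 q.2.1 q.2.2 :=
      (meas_joint hb).stronglyMeasurable
    have h2 := h1.integral_kernel_prod_right' (κ := m.restrict hSm)
    simp only [ProbabilityTheory.Kernel.restrict_apply] at h2
    exact h2
  have Gsm : StronglyMeasurable G := by
    have h1 : StronglyMeasurable fun q : ℝ × (ℝ × ℝ) => g q.1 q.2.1 q.2.2 :=
      hgmeas.stronglyMeasurable
    have h2 := h1.integral_kernel_prod_right' (κ := m.restrict hSm)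
    simp only [ProbabilityTheory.Kernel.restrict_apply] at h2
    exact h2
  -- integrability of the total mass
  have hwint : Integrable w (volume.restrict (Icc (0:ℝ) T)) := by
    refine integrable_toReal_of_lintegral_ne_top ((m.measurable_coe hSm).aemeasurable) hmint.ne
  have hw0 : ∀ t, 0 ≤ w t := fun t => ENNReal.toReal_nonneg
  -- pointwise bounds on H and G
  have hHb : ∀ t, |H t| ≤ C * w t := by
    intro t
    have hb' : ∀ᵐ p ∂((m t).restrict S), ‖h t p.1 p.2‖ ≤ C := by
      filter_upwards with p
      simpa [Real.norm_eq_abs] using (hC t p.1 p.2).1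
    have h2 := norm_integral_le_of_norm_le_const hb'
    rw [Measure.real, Measure.restrict_apply_univ] at h2
    simpa [Real.norm_eq_abs] using h2
  have hGbC : ∀ t, |G t| ≤ Cg * w t := by
    intro t
    have hb' : ∀ᵐ p ∂((m t).restrict S), ‖g t p.1 p.2‖ ≤ Cg := by
      refine (ae_restrict_iff' hSm).mpr (Filter.Eventually.of_forall fun p hp => ?_)
      simpa [Real.norm_eq_abs] using hgb t p.1 p.2 hp.2
    have h2 := norm_integral_le_of_norm_le_const hb'
    rw [Measure.real, Measure.restrict_apply_univ] at h2
    simpa [Real.norm_eq_abs] using h2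
  have hGbM : ∀ t ∈ Icc (0:ℝ) T, |G t| ≤ Mg * w t := by
    intro t ht
    have hb' : ∀ᵐ p ∂((m t).restrict S), ‖g t p.1 p.2‖ ≤ Mg := by
      refine (ae_restrict_iff' hSm).mpr (Filter.Eventually.of_forall fun p hp => ?_)
      simpa [Real.norm_eq_abs] using hMg t ht p.1 hp.1 p.2 hp.2
    have h2 := norm_integral_le_of_norm_le_const hb'
    rw [Measure.real, Measure.restrict_apply_univ] at h2
    simpa [Real.norm_eq_abs] using h2
  -- integrability in t
  have I1 : Integrable (fun t => deriv Ψ t * H t) (volume.restrict (Icc (0:ℝ) T)) := by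
    refine (hwint.const_mul (CΨ * C)).mono'
      (((hΨsm.continuous_deriv le_rfl).measurable.mul Hsm.measurable).aestronglyMeasurable) ?_
    filter_upwards with t
    rw [Real.norm_eq_abs, abs_mul]
    calc |deriv Ψ t| * |H t| ≤ CΨ * (C * w t) :=
        mul_le_mul (hCΨ t).2 (hHb t) (abs_nonneg _) hCΨ0
      _ = CΨ * C * w t := by ring
  have I2 : Integrable (fun t => Ψ t * G t) (volume.restrict (Icc (0:ℝ) T)) := by
    refine (hwint.const_mul (CΨ * Cg)).mono'
      ((hΨsm.continuous.measurable.mul Gsm.measurable).aestronglyMeasurable) ?_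
    filter_upwards with t
    rw [Real.norm_eq_abs, abs_mul]
    calc |Ψ t| * |G t| ≤ CΨ * (Cg * w t) :=
        mul_le_mul (hCΨ t).1 (hGbC t) (abs_nonneg _) hCΨ0
      _ = CΨ * Cg * w t := by ring
  -- the key pointwise identity for the inner integrals
  have E1 : ∀ t, (∫ p in S, (partialT u t p.1 p.2 + genL k θ δ u t p.1 p.2) ∂(m t))
      = deriv Ψ t * H t + Ψ t * G t := by
    intro t
    have heq : (fun p : ℝ × ℝ => partialT u t p.1 p.2 + genL k θ δ u t p.1 p.2)
        = fun p : ℝ × ℝ => deriv Ψ t * h t p.1 p.2 + Ψ t * g t p.1 p.2 :=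
      funext fun p => hkey t p.1 p.2
    rw [heq, integral_add ((Ih t).const_mul _) ((Ig t).const_mul _),
      integral_const_mul _ _, integral_const_mul _ _]
  -- use the linear programming constraint
  have hlp := hLP u hbu
  rw [show (fun t => ∫ p in S, (partialT u t p.1 p.2 + genL k θ δ u t p.1 p.2) ∂(m t))
      = fun t => deriv Ψ t * H t + Ψ t * G t from funext E1] at hlp
  rw [integral_add I1 I2] at hlp
  have E3 : (∫ t in Icc (0:ℝ) T, deriv Ψ t * H t) = ∫ t in Icc (0:ℝ) T, deriv ψ t * H t :=
    setIntegral_congr_fun measurableSet_Icc (fun t ht => by rw [hΨd t ht])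
  have E4 : (∫ t in Icc (0:ℝ) T, Ψ t * G t) = ∫ t in Icc (0:ℝ) T, ψ t * G t :=
    setIntegral_congr_fun measurableSet_Icc (fun t ht => by rw [hΨeq t ht])
  rw [E3, E4] at hlp
  -- bounds on the boundary terms
  have bν : |∫ p in Icc (0:ℝ) T ×ˢ S, u p.1 p.2.1 p.2.2 ∂ν|
      ≤ Mψ * Mh * (ν (Icc (0:ℝ) T ×ˢ S)).toReal := by
    have hb' : ∀ᵐ p ∂(ν.restrict (Icc (0:ℝ) T ×ˢ S)), ‖u p.1 p.2.1 p.2.2‖ ≤ Mψ * Mh := by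
      refine (ae_restrict_iff' hRm).mpr (Filter.Eventually.of_forall fun p hp => ?_)
      obtain ⟨hp1, hp2⟩ := hp
      show ‖Ψ p.1 * h p.1 p.2.1 p.2.2‖ ≤ Mψ * Mh
      rw [Real.norm_eq_abs, abs_mul, hΨeq p.1 hp1]
      exact mul_le_mul (hMψ p.1 hp1) (hMh p.1 hp1 p.2.1 hp2.1 p.2.2 hp2.2)
        (abs_nonneg _) hMψ0
    have h2 := norm_integral_le_of_norm_le_const hb'
    rw [Measure.real, Measure.restrict_apply_univ] at h2
    simpa [Real.norm_eq_abs] using h2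
  have bμ : |∫ p in Icc (0:ℝ) T ×ˢ S, u p.1 p.2.1 p.2.2 ∂μ|
      ≤ Mψ * Mh * (μ (Icc (0:ℝ) T ×ˢ S)).toReal := by
    have hb' : ∀ᵐ p ∂(μ.restrict (Icc (0:ℝ) T ×ˢ S)), ‖u p.1 p.2.1 p.2.2‖ ≤ Mψ * Mh := by
      refine (ae_restrict_iff' hRm).mpr (Filter.Eventually.of_forall fun p hp => ?_)
      obtain ⟨hp1, hp2⟩ := hp
      show ‖Ψ p.1 * h p.1 p.2.1 p.2.2‖ ≤ Mψ * Mh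
      rw [Real.norm_eq_abs, abs_mul, hΨeq p.1 hp1]
      exact mul_le_mul (hMψ p.1 hp1) (hMh p.1 hp1 p.2.1 hp2.1 p.2.2 hp2.2)
        (abs_nonneg _) hMψ0
    have h2 := norm_integral_le_of_norm_le_const hb'
    rw [Measure.real, Measure.restrict_apply_univ] at h2
    simpa [Real.norm_eq_abs] using h2
  have bG : |∫ t in Icc (0:ℝ) T, ψ t * G t| ≤ Mψ * Mg * ∫ t in Icc (0:ℝ) T, w t := by
    have hb' : ∀ᵐ t ∂(volume.restrict (Icc (0:ℝ) T)), ‖ψ t * G t‖ ≤ Mψ * Mg * w t := by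
      refine (ae_restrict_iff' measurableSet_Icc).mpr
        (Filter.Eventually.of_forall fun t ht => ?_)
      rw [Real.norm_eq_abs, abs_mul]
      calc |ψ t| * |G t| ≤ Mψ * (Mg * w t) :=
          mul_le_mul (hMψ t ht) (hGbM t ht) (abs_nonneg _) hMψ0
        _ = Mψ * Mg * w t := by ring
    have h2 := norm_integral_le_of_norm_le (hwint.const_mul (Mψ * Mg)) hb'
    rw [integral_const_mul] at h2
    simpa [Real.norm_eq_abs] using h2
  -- conclude
  have hfin : (∫ t in Icc (0:ℝ) T, deriv ψ t * H t)
      = (∫ p in Icc (0:ℝ) T ×ˢ S, u p.1 p.2.1 p.2.2 ∂μ)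
        - (∫ p in Icc (0:ℝ) T ×ˢ S, u p.1 p.2.1 p.2.2 ∂ν)
        - ∫ t in Icc (0:ℝ) T, ψ t * G t := by linarith
  have hgoal : (∫ t in Icc (0:ℝ) T, deriv ψ t * ∫ p in S, h t p.1 p.2 ∂(m t))
      = ∫ t in Icc (0:ℝ) T, deriv ψ t * H t := rfl
  rw [hgoal, hfin]
  have htri : |(∫ p in Icc (0:ℝ) T ×ˢ S, u p.1 p.2.1 p.2.2 ∂μ)
        - (∫ p in Icc (0:ℝ) T ×ˢ S, u p.1 p.2.1 p.2.2 ∂ν)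
        - ∫ t in Icc (0:ℝ) T, ψ t * G t|
      ≤ |∫ p in Icc (0:ℝ) T ×ˢ S, u p.1 p.2.1 p.2.2 ∂μ|
        + |∫ p in Icc (0:ℝ) T ×ˢ S, u p.1 p.2.1 p.2.2 ∂ν|
        + |∫ t in Icc (0:ℝ) T, ψ t * G t| := by
    have := abs_add_three (∫ p in Icc (0:ℝ) T ×ˢ S, u p.1 p.2.1 p.2.2 ∂μ)
      (-(∫ p in Icc (0:ℝ) T ×ˢ S, u p.1 p.2.1 p.2.2 ∂ν))
      (-(∫ t in Icc (0:ℝ) T, ψ t * G t))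
    simpa [sub_eq_add_neg, abs_neg] using this
  refine htri.trans ?_
  have hwgoal : (∫ t in Icc (0:ℝ) T, (m t S).toReal) = ∫ t in Icc (0:ℝ) T, w t := rfl
  rw [hwgoal]
  linarith [bν, bμ, bG]
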